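/- Let N, t ∈ ℕ with 2 ≤ t ≤ N. Then P(M_N < t−1) ≤ ( 1 − (pq)^{⌊t/2⌋} )^{⌊N/t⌋}; indeed, on the event {M_N < t−1} each of the ⌊N/t⌋ disjoint blocks of t consecutive trials X_{tk+1},…,X_{t(k+1)}, k = 0,…,⌊N/t⌋−1, fails to be fully alternating, and these block events are independent with failure probability at most 1 − (pq)^{⌊t/2⌋} each. -/

import Mathlib

open MeasureTheory ProbabilityTheory Filter
open scoped Classical

/-- `switchCount X n m ω` is the number of switches `S_n^{(m)}` in the `n` trials
`X_m, …, X_{m+n-1}`. -/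
def switchCount {Ω : Type*} (X : ℕ → Ω → ℕ) (n m : ℕ) (ω : Ω) : ℕ :=
  ∑ i ∈ Finset.Icc (m + 1) (n + m - 1),
    ((1 - X (i - 1) ω) * X i ω + X (i - 1) ω * (1 - X i ω))

/-- `longestSwitch X N m ω` is `M_N^{(m)}`, the length of the longest run of consecutive
switches in the trials `X_m, …, X_{m+N-1}`. -/
noncomputable def longestSwitch {Ω : Type*} (X : ℕ → Ω → ℕ) (N m : ℕ) (ω : Ω) : ℕ :=
  ((Finset.Icc 1 N).filter fun n =>
      ∃ i ∈ Finset.Icc m (m + N - n + 1), switchCount X n i ω = n - 1).sup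
    fun n => n - 1


/-- alternating pattern starting with `b` -/
def pat (b j : ℕ) : ℕ := if j % 2 = 0 then b else 1 - b

lemma card_filter_odd (t : ℕ) :
    ((Finset.range t).filter fun j => ¬ j % 2 = 0).card = t / 2 := by
  induction t with
  | zero => simp
  | succ n ih =>
    rw [Finset.range_add_one, Finset.filter_insert]
    by_cases h : n % 2 = 0
    · rw [if_neg (by simpa using h), ih]; omega
    · rw [if_pos h, Finset.card_insert_of_notMem (by simp), ih]; omega

lemma switchCount_pat {Ω : Type*} (X : ℕ → Ω → ℕ) (s t b : ℕ) (hb : b ≤ 1)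
    (ht : 2 ≤ t) (ω : Ω) (hpat : ∀ j < t, X (s + j) ω = pat b j) :
    switchCount X t s ω = t - 1 := by
  unfold switchCount
  have hone : ∀ i ∈ Finset.Icc (s + 1) (t + s - 1),
      (1 - X (i - 1) ω) * X i ω + X (i - 1) ω * (1 - X i ω) = 1 := by
    intro i hi
    rw [Finset.mem_Icc] at hi
    obtain ⟨h1, h2⟩ := hi
    have e1 := hpat (i - s) (by omega)
    rw [show s + (i - s) = i by omega] at e1
    have e2 := hpat (i - s - 1) (by omega)
    rw [show s + (i - s - 1) = i - 1 by omega] at e2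
    rw [e1, e2]
    unfold pat
    by_cases hp : (i - s) % 2 = 0
    · rw [if_pos hp, if_neg (by omega)]
      interval_cases b <;> norm_num
    · rw [if_neg hp, if_pos (by omega)]
      interval_cases b <;> norm_num
  rw [Finset.sum_congr rfl hone, Finset.sum_const, smul_eq_mul, mul_one, Nat.card_Icc]
  omega

lemma le_longestSwitch {Ω : Type*} (X : ℕ → Ω → ℕ) (N t k : ℕ) (ht : 1 ≤ t) (htN : t ≤ N)
    (hk : t * (k + 1) ≤ N) (ω : Ω) (h : switchCount X t (t * k + 1) ω = t - 1) :
    t - 1 ≤ longestSwitch X N 1 ω := by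
  unfold longestSwitch
  have hms : t * (k + 1) = t * k + t := by ring
  exact Finset.le_sup (f := fun n => n - 1) (by
    simp only [Finset.mem_filter, Finset.mem_Icc]
    exact ⟨⟨ht, htN⟩, t * k + 1, ⟨by omega, by omega⟩, h⟩)

lemma indep_dep {Ω : Type*} [MeasurableSpace Ω] (μ : Measure Ω)
    (X : ℕ → Ω → ℕ) (hmeas : ∀ i, Measurable (X i))
    (hindep : iIndepFun X μ)
    (S T : Finset ℕ) (hST : Disjoint S T) (P Q : (ℕ → ℕ) → Prop)
    (hP : ∀ f g : ℕ → ℕ, (∀ i ∈ S, f i = g i) → (P f ↔ P g))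
    (hQ : ∀ f g : ℕ → ℕ, (∀ i ∈ T, f i = g i) → (Q f ↔ Q g)) :
    μ ({ω | P fun i => X i ω} ∩ {ω | Q fun i => X i ω})
      = μ {ω | P fun i => X i ω} * μ {ω | Q fun i => X i ω} := by
  have hIF := hindep.indepFun_finset S T hST hmeas
  set AP : Set (S → ℕ) := {g | P fun i => if h : i ∈ S then g ⟨i, h⟩ else 0} with hAP
  set AQ : Set (T → ℕ) := {g | Q fun i => if h : i ∈ T then g ⟨i, h⟩ else 0} with hAQ
  have hFP : (fun ω (i : S) => X i ω) ⁻¹' AP = {ω | P fun i => X i ω} := by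
    ext ω
    simp only [Set.mem_preimage, hAP, Set.mem_setOf_eq]
    exact hP _ _ fun i hi => by simp [hi]
  have hGQ : (fun ω (i : T) => X i ω) ⁻¹' AQ = {ω | Q fun i => X i ω} := by
    ext ω
    simp only [Set.mem_preimage, hAQ, Set.mem_setOf_eq]
    exact hQ _ _ fun i hi => by simp [hi]
  have key := hIF.measure_inter_preimage_eq_mul AP AQ
    MeasurableSet.of_discrete MeasurableSet.of_discrete
  rw [hFP, hGQ] at key
  exact key

def AltPred (t k : ℕ) (f : ℕ → ℕ) : Prop :=
  (∀ j < t, f (t * k + 1 + j) = pat 1 j) ∨ (∀ j < t, f (t * k + 1 + j) = pat 0 j)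

theorem prob_longestSwitch_lt_le_blocks
    {Ω : Type*} [MeasurableSpace Ω] (μ : Measure Ω) [IsProbabilityMeasure μ]
    (p q : ℝ) (hp0 : 0 < p) (hp1 : p < 1) (hq : q = 1 - p)
    (X : ℕ → Ω → ℕ)
    (hmeas : ∀ i, Measurable (X i))
    (hval : ∀ i ω, X i ω ≤ 1)
    (hdist : ∀ i, μ {ω | X i ω = 1} = ENNReal.ofReal p)
    (hindep : iIndepFun X μ)
    (N t : ℕ) (ht : 2 ≤ t) (htN : t ≤ N) :
    (μ {ω | longestSwitch X N 1 ω < t - 1}).toReal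
      ≤ (1 - (p * q) ^ (t / 2)) ^ (N / t) := by
  subst hq
  set b : ℕ := t / 2 with hbdef
  set K : ℕ := N / t with hKdef
  set r : ℝ := 1 - (p * (1 - p)) ^ b with hrdef
  have hq0 : 0 < 1 - p := by linarith
  have hpq0 : (0:ℝ) ≤ p * (1 - p) := by positivity
  have hpq1 : p * (1 - p) ≤ 1 := by nlinarith
  have hx0 : (0:ℝ) ≤ (p * (1 - p)) ^ b := by positivity
  have hx1 : (p * (1 - p)) ^ b ≤ 1 := pow_le_one₀ hpq0 hpq1
  have hr0 : 0 ≤ r := by simp only [hrdef]; linarith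
  -- measure of a single coordinate event
  have hone : ∀ (i c : ℕ), c ≤ 1 →
      μ (X i ⁻¹' {c}) = ENNReal.ofReal (if c = 1 then p else 1 - p) := by
    intro i c hc
    interval_cases c
    · have hcompl : X i ⁻¹' {0} = (X i ⁻¹' {1})ᶜ := by
        ext ω
        simp only [Set.mem_preimage, Set.mem_singleton_iff, Set.mem_compl_iff]
        have := hval i ω; omega
      have hd : μ (X i ⁻¹' {1}) = ENNReal.ofReal p := hdist i
      rw [hcompl, prob_compl_eq_one_sub (hmeas i (measurableSet_singleton 1)), hd,
        if_neg (by norm_num), ← ENNReal.ofReal_one, ← ENNReal.ofReal_sub 1 hp0.le]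
    · rw [if_pos rfl]; exact hdist i
  have hpatle : ∀ b' : ℕ, b' ≤ 1 → ∀ j, pat b' j ≤ 1 := by
    intro b' hb' j; unfold pat; split <;> omega
  -- measure of a pattern event
  have hEpt : ∀ (s n b' : ℕ), b' ≤ 1 →
      μ (⋂ j ∈ Finset.range n, X (s + j) ⁻¹' {pat b' j})
        = ENNReal.ofReal (∏ j ∈ Finset.range n, if pat b' j = 1 then p else 1 - p) := by
    intro s n b' hb'
    have hinj : ∀ x ∈ Finset.range n, ∀ y ∈ Finset.range n, s + x = s + y → x = y :=
      fun x _ y _ h => by omega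
    have h2 := hindep.measure_inter_preimage_eq_mul
      (S := (Finset.range n).image fun j => s + j)
      (sets := fun i => ({pat b' (i - s)} : Set ℕ)) (fun i _ => measurableSet_singleton _)
    rw [Finset.set_biInter_finset_image, Finset.prod_image hinj] at h2
    simp only [Nat.add_sub_cancel_left] at h2
    rw [h2, Finset.prod_congr rfl fun j _ => hone (s + j) (pat b' j) (hpatle b' hb' j)]
    exact (ENNReal.ofReal_prod_of_nonneg fun i _ => by split <;> linarith).symm
  -- product values
  have hcards : ((Finset.range t).filter fun j => ¬ j % 2 = 0).card = b := card_filter_odd t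
  have hcarde : ((Finset.range t).filter fun j => j % 2 = 0).card = t - b := by
    have := Finset.card_filter_add_card_filter_not
      (s := Finset.range t) (p := fun j => j % 2 = 0)
    rw [Finset.card_range] at this
    omega
  have hprod : ∀ b' : ℕ, b' ≤ 1 →
      (∏ j ∈ Finset.range t, if pat b' j = 1 then p else 1 - p)
        = (if b' = 1 then p ^ (t - b) * (1 - p) ^ b else (1 - p) ^ (t - b) * p ^ b) := by
    intro b' hb'
    interval_cases b'
    · rw [if_neg (by norm_num),
        Finset.prod_congr rfl (g := fun j => if j % 2 = 0 then 1 - p else p)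
          (fun j _ => by unfold pat; by_cases h : j % 2 = 0 <;> simp [h]),
        Finset.prod_ite, Finset.prod_const, Finset.prod_const, hcards, hcarde]
    · rw [if_pos rfl,
        Finset.prod_congr rfl (g := fun j => if j % 2 = 0 then p else 1 - p)
          (fun j _ => by unfold pat; by_cases h : j % 2 = 0 <;> simp [h]),
        Finset.prod_ite, Finset.prod_const, Finset.prod_const, hcards, hcarde]
  -- lower bound for the probability that a block is alternating
  have hAlt : ∀ k : ℕ,
      ENNReal.ofReal ((p * (1 - p)) ^ b) ≤ μ {ω | AltPred t k fun i => X i ω} := by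
    intro k
    set s := t * k + 1 with hsdef
    have hsetsplit : {ω | AltPred t k fun i => X i ω}
        = (⋂ j ∈ Finset.range t, X (s + j) ⁻¹' {pat 1 j})
          ∪ (⋂ j ∈ Finset.range t, X (s + j) ⁻¹' {pat 0 j}) := by
      ext ω
      simp only [AltPred, Set.mem_setOf_eq, Set.mem_union, Set.mem_iInter,
        Finset.mem_range, Set.mem_preimage, Set.mem_singleton_iff]
      exact Iff.rfl
    have hmeasE : ∀ b' : ℕ, MeasurableSet (⋂ j ∈ Finset.range t, X (s + j) ⁻¹' {pat b' j}) :=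
      fun b' => Finset.measurableSet_biInter _
        (fun j _ => hmeas _ (measurableSet_singleton _))
    have hdisj : Disjoint (⋂ j ∈ Finset.range t, X (s + j) ⁻¹' {pat 1 j})
        (⋂ j ∈ Finset.range t, X (s + j) ⁻¹' {pat 0 j}) := by
      rw [Set.disjoint_left]
      intro ω h1 h0
      have a1 := Set.mem_iInter₂.1 h1 0 (Finset.mem_range.2 (by omega))
      have a0 := Set.mem_iInter₂.1 h0 0 (Finset.mem_range.2 (by omega))
      simp only [Set.mem_preimage, Set.mem_singleton_iff] at a1 a0
      rw [show pat 1 0 = 1 from rfl] at a1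
      rw [show pat 0 0 = 0 from rfl] at a0
      omega
    rw [hsetsplit, measure_union hdisj (hmeasE 0), hEpt s t 1 (by omega), hEpt s t 0 (by omega),
      hprod 1 (by omega), hprod 0 (by omega), if_pos rfl, if_neg (by norm_num),
      ← ENNReal.ofReal_add (by positivity) (by positivity)]
    apply ENNReal.ofReal_le_ofReal
    have hab : t - b = b ∨ t - b = b + 1 := by omega
    rcases hab with hab | hab
    · rw [hab, mul_pow]
      nlinarith [pow_nonneg hp0.le b, pow_nonneg hq0.le b, pow_pos hp0 b, pow_pos hq0 b]
    · rw [hab, mul_pow]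
      have key : p ^ (b + 1) * (1 - p) ^ b + (1 - p) ^ (b + 1) * p ^ b
          = p ^ b * (1 - p) ^ b := by ring
      rw [key]
  -- main induction over blocks
  have hstep : ∀ m : ℕ,
      μ {ω | ∀ k < m, ¬ AltPred t k fun i => X i ω} ≤ ENNReal.ofReal (r ^ m) := by
    intro m
    induction m with
    | zero =>
      have : {ω : Ω | ∀ k < 0, ¬ AltPred t k fun i => X i ω} = Set.univ := by
        ext ω; simp
      rw [this, measure_univ, pow_zero, ENNReal.ofReal_one]
    | succ m ih =>
      have hsplit : {ω | ∀ k < m + 1, ¬ AltPred t k fun i => X i ω}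
          = {ω | (fun f => ∀ k < m, ¬ AltPred t k f) fun i => X i ω}
            ∩ {ω | (fun f => ¬ AltPred t m f) fun i => X i ω} := by
        ext ω
        simp only [Set.mem_inter_iff, Set.mem_setOf_eq]
        constructor
        · exact fun h => ⟨fun k hk => h k (by omega), h m (by omega)⟩
        · rintro ⟨h1, h2⟩ k hk
          rcases Nat.lt_succ_iff_lt_or_eq.1 hk with h | rfl
          · exact h1 k h
          · exact h2
      have hdisjST : Disjoint (Finset.Icc 1 (t * m)) (Finset.Icc (t * m + 1) (t * m + t)) := by
        rw [Finset.disjoint_left]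
        intro a ha hb
        rw [Finset.mem_Icc] at ha hb
        omega
      have hP : ∀ f g : ℕ → ℕ, (∀ i ∈ Finset.Icc 1 (t * m), f i = g i) →
          ((∀ k < m, ¬ AltPred t k f) ↔ ∀ k < m, ¬ AltPred t k g) := by
        intro f g hfg
        have e : ∀ k < m, ∀ j < t, f (t * k + 1 + j) = g (t * k + 1 + j) := by
          intro k hk j hj
          apply hfg
          rw [Finset.mem_Icc]
          have h1 : t * (k + 1) ≤ t * m := Nat.mul_le_mul_left t hk
          have h2 : t * (k + 1) = t * k + t := by ring
          omega
        exact forall₂_congr fun k hk => not_congr (or_congr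
          (forall₂_congr fun j hj => by rw [e k hk j hj])
          (forall₂_congr fun j hj => by rw [e k hk j hj]))
      have hQ : ∀ f g : ℕ → ℕ, (∀ i ∈ Finset.Icc (t * m + 1) (t * m + t), f i = g i) →
          ((¬ AltPred t m f) ↔ ¬ AltPred t m g) := by
        intro f g hfg
        have e : ∀ j < t, f (t * m + 1 + j) = g (t * m + 1 + j) := fun j hj =>
          hfg _ (Finset.mem_Icc.2 ⟨by omega, by omega⟩)
        exact not_congr (or_congr
          (forall₂_congr fun j hj => by rw [e j hj])
          (forall₂_congr fun j hj => by rw [e j hj]))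
      have hQbound : μ {ω | (fun f => ¬ AltPred t m f) fun i => X i ω} ≤ ENNReal.ofReal r := by
        have hcompl : {ω | (fun f => ¬ AltPred t m f) fun i => X i ω}
            = {ω | AltPred t m fun i => X i ω}ᶜ := rfl
        have hmeasA : MeasurableSet {ω | AltPred t m fun i => X i ω} := by
          have : {ω | AltPred t m fun i => X i ω}
              = (⋂ j ∈ Finset.range t, X (t * m + 1 + j) ⁻¹' {pat 1 j})
                ∪ (⋂ j ∈ Finset.range t, X (t * m + 1 + j) ⁻¹' {pat 0 j}) := by
            ext ω
            simp only [AltPred, Set.mem_setOf_eq, Set.mem_union, Set.mem_iInter,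
              Finset.mem_range, Set.mem_preimage, Set.mem_singleton_iff]
          rw [this]
          exact (Finset.measurableSet_biInter _ fun j _ => hmeas _ (measurableSet_singleton _)).union
            (Finset.measurableSet_biInter _ fun j _ => hmeas _ (measurableSet_singleton _))
        rw [hcompl, prob_compl_eq_one_sub hmeasA]
        calc 1 - μ {ω | AltPred t m fun i => X i ω}
            ≤ 1 - ENNReal.ofReal ((p * (1 - p)) ^ b) := tsub_le_tsub_left (hAlt m) 1
          _ = ENNReal.ofReal r := by
              rw [← ENNReal.ofReal_one, ← ENNReal.ofReal_sub 1 hx0]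
      calc μ {ω | ∀ k < m + 1, ¬ AltPred t k fun i => X i ω}
          = μ ({ω | (fun f => ∀ k < m, ¬ AltPred t k f) fun i => X i ω}
              ∩ {ω | (fun f => ¬ AltPred t m f) fun i => X i ω}) := by rw [hsplit]
        _ = μ {ω | (fun f => ∀ k < m, ¬ AltPred t k f) fun i => X i ω}
              * μ {ω | (fun f => ¬ AltPred t m f) fun i => X i ω} :=
            indep_dep μ X hmeas hindep _ _ hdisjST _ _ hP hQ
        _ ≤ ENNReal.ofReal (r ^ m) * ENNReal.ofReal r := mul_le_mul' ih hQbound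
        _ = ENNReal.ofReal (r ^ (m + 1)) := by
            rw [← ENNReal.ofReal_mul (by positivity), ← pow_succ]
  -- containment
  have hsub : {ω | longestSwitch X N 1 ω < t - 1}
      ⊆ {ω | ∀ k < K, ¬ AltPred t k fun i => X i ω} := by
    intro ω hω k hk halt
    have hk1 : t * (k + 1) ≤ N := by
      have h2 : t * (k + 1) ≤ t * K := Nat.mul_le_mul_left t hk
      have h3 : K * t ≤ N := Nat.div_mul_le_self N t
      have h4 : t * K = K * t := by ring
      omega
    have hsc : switchCount X t (t * k + 1) ω = t - 1 := by
      rcases halt with h | h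
      · exact switchCount_pat X (t * k + 1) t 1 le_rfl ht ω h
      · exact switchCount_pat X (t * k + 1) t 0 (by omega) ht ω h
    have := le_longestSwitch X N t k (by omega) htN hk1 ω hsc
    have hω' : longestSwitch X N 1 ω < t - 1 := hω
    omega
  calc (μ {ω | longestSwitch X N 1 ω < t - 1}).toReal
      ≤ (ENNReal.ofReal (r ^ K)).toReal := by
        apply ENNReal.toReal_mono ENNReal.ofReal_ne_top
        exact le_trans (measure_mono hsub) (hstep K)
    _ = r ^ K := ENNReal.toReal_ofReal (by positivity)
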